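/- (Discrete Gagliardo–Nirenberg inequality.) There exists a constant C > 0 such that for every even integer K ≥ 2 and every U ∈ ℂ^{B^K}, (2π/K)·Σ_{k∈B^K}|U_k|⁴ ≤ C·(‖U‖_{h¹} + ‖U‖_{ℓ²})·‖U‖_{ℓ²}³. -/

import Mathlib

/-- The index set `B^K = {−K/2, …, K/2−1}` (for `K` even). -/
noncomputable def BK (K : ℕ) : Finset ℤ := Finset.Icc (-((K : ℤ) / 2)) ((K : ℤ) / 2 - 1)

/-- The discrete Fourier transform `(F_K U)_j = (1/K) Σ_{k∈B^K} e^{−2πijk/K} U_k`. -/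
noncomputable def dft (K : ℕ) (U : ℤ → ℂ) (j : ℤ) : ℂ :=
  (1 / (K : ℂ)) * ∑ k ∈ BK K,
    Complex.exp (-(2 * (Real.pi : ℂ) * Complex.I * (j : ℂ) * (k : ℂ)) / (K : ℂ)) * U k

/-- The inverse discrete Fourier transform `(F_K⁻¹ W)_k = Σ_{j∈B^K} e^{2πijk/K} W_j`. -/
noncomputable def idft (K : ℕ) (W : ℤ → ℂ) (k : ℤ) : ℂ :=
  ∑ j ∈ BK K,
    Complex.exp ((2 * (Real.pi : ℂ) * Complex.I * (j : ℂ) * (k : ℂ)) / (K : ℂ)) * W j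

/-- The discrete `ℓ²` norm: `‖U‖_{ℓ²}² = (2π/K) Σ_{k∈B^K} |U_k|²`. -/
noncomputable def l2normK (K : ℕ) (U : ℤ → ℂ) : ℝ :=
  Real.sqrt ((2 * Real.pi / K) * ∑ k ∈ BK K, ‖U k‖ ^ 2)

/-- The discrete `h¹` norm: `‖U‖_{h¹}² = (2π/K) Σ_{k∈B^K} |(U_{k+1}−U_k)/δx|²`
with `δx = 2π/K`. -/
noncomputable def h1normK (K : ℕ) (U : ℤ → ℂ) : ℝ :=
  Real.sqrt ((2 * Real.pi / K) *
    ∑ k ∈ BK K, ‖(U (k + 1) - U k) / ((2 * Real.pi / K : ℝ) : ℂ)‖ ^ 2)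

/-- The discrete kinetic energy `T^K(W) = (1/K) Σ_{j∈B^K} j²|W_j|²`. -/
noncomputable def tK (K : ℕ) (W : ℤ → ℂ) : ℝ :=
  (1 / (K : ℝ)) * ∑ j ∈ BK K, (j : ℝ) ^ 2 * ‖W j‖ ^ 2

/-- The discrete free Schrödinger flow `e^{itΔ^K}U = F_K⁻¹(j ↦ e^{−itj²}(F_K U)_j)`. -/
noncomputable def freeFlowK (K : ℕ) (t : ℝ) (U : ℤ → ℂ) : ℤ → ℂ :=
  idft K (fun j => Complex.exp (-(Complex.I * (t : ℂ)) * (j : ℂ) ^ 2) * dft K U j)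

open Finset

namespace Stmt11Aux

lemma card_BK {K m : ℕ} (hm : K = m + m) : (BK K).card = K := by
  have hK2 : (K : ℤ) = (m : ℤ) + m := by exact_mod_cast congrArg (Nat.cast : ℕ → ℤ) hm
  rw [BK, Int.card_Icc]
  omega

/-- shift lemma for periodic functions -/
lemma sum_shift {K m : ℕ} (hm : K = m + m) (hm1 : 1 ≤ m) (f : ℤ → ℝ)
    (hf : ∀ j : ℤ, f (j + K) = f j) :
    ∑ k ∈ BK K, f (k + 1) = ∑ k ∈ BK K, f k := by
  have hK2 : (K : ℤ) = (m : ℤ) + m := by exact_mod_cast congrArg (Nat.cast : ℕ → ℤ) hm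
  have hdiv : (K : ℤ) / 2 = m := by omega
  have hm1' : (1 : ℤ) ≤ m := by exact_mod_cast hm1
  have h1 : ∑ k ∈ BK K, f (k + 1) = ∑ k ∈ Finset.Icc (-(m : ℤ) + 1) ((m : ℤ) - 1 + 1), f k := by
    rw [BK, hdiv, ← Finset.map_add_right_Icc _ _ 1, Finset.sum_map]
    simp [addRightEmbedding]
  have h2 : Finset.Icc (-(m : ℤ) + 1) ((m : ℤ) - 1 + 1) = insert (m : ℤ) (Finset.Icc (-(m:ℤ) + 1) ((m:ℤ) - 1)) := by
    ext x; simp only [Finset.mem_Icc, Finset.mem_insert]; omega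
  have h3 : BK K = insert (-(m : ℤ)) (Finset.Icc (-(m:ℤ) + 1) ((m:ℤ) - 1)) := by
    rw [BK, hdiv]; ext x; simp only [Finset.mem_Icc, Finset.mem_insert]; omega
  have hfm : f m = f (-(m : ℤ)) := by
    have := hf (-(m : ℤ))
    rw [← this]; congr 1; omega
  rw [h1, h2, h3, Finset.sum_insert (by simp), Finset.sum_insert (by simp), hfm]

/-- telescoping bound -/
lemma tele_core {K : ℕ} (g : ℤ → ℝ) {p q : ℤ} (hp : p ∈ BK K) (hq : q ∈ BK K) (hpq : p ≤ q) :
    |g q - g p| ≤ ∑ k ∈ BK K, |g (k + 1) - g k| := by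
  obtain ⟨N, hN⟩ : ∃ N : ℕ, q = p + N := ⟨(q - p).toNat, by omega⟩
  subst hN
  have key : ∑ i ∈ Finset.range N, (g (p + (i + 1 : ℕ)) - g (p + i)) = g (p + N) - g (p + (0 : ℕ)) :=
    Finset.sum_range_sub (fun i : ℕ => g (p + i)) N
  have h0 : |g (p + (N : ℤ)) - g p| ≤ ∑ i ∈ Finset.range N, |g (p + i + 1) - g (p + i)| := by
    calc |g (p + (N : ℤ)) - g p| = |∑ i ∈ Finset.range N, (g (p + (i + 1 : ℕ)) - g (p + i))| := by
          rw [key]; norm_num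
      _ ≤ ∑ i ∈ Finset.range N, |g (p + (i + 1 : ℕ)) - g (p + i)| := Finset.abs_sum_le_sum_abs _ _
      _ = ∑ i ∈ Finset.range N, |g (p + i + 1) - g (p + i)| := by
          apply Finset.sum_congr rfl; intro i _; congr 2; push_cast; ring
  refine h0.trans ?_
  have himg : ∑ i ∈ Finset.range N, |g (p + i + 1) - g (p + i)|
      = ∑ k ∈ (Finset.range N).image (fun i : ℕ => p + (i : ℤ)), |g (k + 1) - g k| := by
    rw [Finset.sum_image]
    intro a _ b _ hab; have hab' : p + (a:ℤ) = p + (b:ℤ) := hab; omega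
  rw [himg]
  apply Finset.sum_le_sum_of_subset_of_nonneg
  · intro k hk
    simp only [Finset.mem_image, Finset.mem_range] at hk
    obtain ⟨i, hi, rfl⟩ := hk
    simp only [BK, Finset.mem_Icc] at hp hq ⊢
    omega
  · intro k _ _; exact abs_nonneg _

lemma tele {K : ℕ} (g : ℤ → ℝ) {m n : ℤ} (hm : m ∈ BK K) (hn : n ∈ BK K) :
    |g m - g n| ≤ ∑ k ∈ BK K, |g (k + 1) - g k| := by
  rcases le_total n m with h | h
  · exact tele_core g hn hm h
  · rw [abs_sub_comm]; exact tele_core g hm hn h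

end Stmt11Aux

set_option maxHeartbeats 1000000 in
/-- **discrete Gagliardo–Nirenberg inequality.** There is a constant `C > 0`
such that for every even `K ≥ 2` and every (periodically indexed) `U ∈ ℂ^{B^K}`,
`(2π/K)·Σ_{k∈B^K} |U_k|⁴ ≤ C·(‖U‖_{h¹} + ‖U‖_{ℓ²})·‖U‖_{ℓ²}³`. -/
theorem stmt11 :
    ∃ C : ℝ, 0 < C ∧
      ∀ K : ℕ, 2 ≤ K → Even K →
        ∀ U : ℤ → ℂ, (∀ j : ℤ, U (j + K) = U j) →
          (2 * Real.pi / K) * ∑ k ∈ BK K, ‖U k‖ ^ 4 ≤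
            C * (h1normK K U + l2normK K U) * l2normK K U ^ 3 := by
  refine ⟨2, by norm_num, ?_⟩
  intro K hK hKe U hU
  obtain ⟨m, hm⟩ := hKe
  have hm1 : 1 ≤ m := by omega
  have hKpos : (0 : ℝ) < K := by
    have : (0 : ℕ) < K := by omega
    exact_mod_cast this
  have hπ : 0 < Real.pi := Real.pi_pos
  set δ : ℝ := 2 * Real.pi / K with hδdef
  have hδ : 0 < δ := by rw [hδdef]; positivity
  set g : ℤ → ℝ := fun k => ‖U k‖ ^ 2 with hg
  set d : ℤ → ℝ := fun k => ‖U (k + 1) - U k‖ with hd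
  set S2 : ℝ := ∑ k ∈ BK K, g k with hS2
  set D : ℝ := ∑ k ∈ BK K, d k ^ 2 with hD
  set T : ℝ := ∑ k ∈ BK K, |g (k + 1) - g k| with hT
  have hgnn : ∀ k, 0 ≤ g k := fun k => by simp only [hg]; positivity
  have hS2nn : 0 ≤ S2 := Finset.sum_nonneg fun k _ => hgnn k
  have hDnn : 0 ≤ D := Finset.sum_nonneg fun k _ => sq_nonneg _
  have hTnn : 0 ≤ T := Finset.sum_nonneg fun k _ => abs_nonneg _
  have hgper : ∀ j : ℤ, g (j + K) = g j := by
    intro j; simp only [hg]; rw [hU j]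
  have hshift : ∑ k ∈ BK K, g (k + 1) = S2 := by
    rw [hS2]; exact Stmt11Aux.sum_shift hm hm1 g hgper
  -- sup bound
  have hsup : ∀ k ∈ BK K, g k ≤ S2 / K + T := by
    intro k hk
    have h1 : ∀ n ∈ BK K, g k - T ≤ g n := by
      intro n hn
      have h := Stmt11Aux.tele (K := K) g hk hn
      have h2 := le_abs_self (g k - g n)
      simp only [← hT] at h
      linarith
    have h2 : ∑ n ∈ BK K, (g k - T) ≤ S2 := by
      rw [hS2]; exact Finset.sum_le_sum h1
    rw [Finset.sum_const, Stmt11Aux.card_BK hm, nsmul_eq_mul] at h2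
    have h3 : (g k - T) * K ≤ S2 := by linarith [h2]
    have h4 : g k - T ≤ S2 / K := (le_div_iff₀ hKpos).mpr h3
    linarith
  -- quartic bound
  have hquart : ∑ k ∈ BK K, ‖U k‖ ^ 4 ≤ (S2 / K + T) * S2 := by
    have hpt : ∀ k ∈ BK K, ‖U k‖ ^ 4 ≤ (S2 / K + T) * g k := by
      intro k hk
      have h1 : ‖U k‖ ^ 4 = g k * g k := by simp only [hg]; ring
      rw [h1]
      exact mul_le_mul_of_nonneg_right (hsup k hk) (hgnn k)
    calc ∑ k ∈ BK K, ‖U k‖ ^ 4 ≤ ∑ k ∈ BK K, (S2 / K + T) * g k :=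
          Finset.sum_le_sum hpt
      _ = (S2 / K + T) * S2 := by rw [← Finset.mul_sum, hS2]
  -- Cauchy-Schwarz bound for T
  have hcs : T ≤ 2 * Real.sqrt D * Real.sqrt S2 := by
    have hpt : ∀ k ∈ BK K,
        |g (k + 1) - g k| ≤ d k * (‖U (k + 1)‖ + ‖U k‖) := by
      intro k _
      have habs : |‖U (k + 1)‖ - ‖U k‖| ≤ d k := by
        simp only [hd]; exact abs_norm_sub_norm_le _ _
      have heq : |g (k + 1) - g k| =
          |‖U (k + 1)‖ - ‖U k‖| *
            (‖U (k + 1)‖ + ‖U k‖) := by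
        simp only [hg]
        rw [← abs_of_nonneg (show (0:ℝ) ≤ ‖U (k + 1)‖ + ‖U k‖ by
          positivity), ← abs_mul]
        congr 1; ring
      rw [heq]
      exact mul_le_mul_of_nonneg_right habs (by positivity)
    have hR : T ≤ ∑ k ∈ BK K, d k * (‖U (k + 1)‖ + ‖U k‖) := by
      rw [hT]; exact Finset.sum_le_sum hpt
    set R : ℝ := ∑ k ∈ BK K, d k * (‖U (k + 1)‖ + ‖U k‖) with hRdef
    have hRnn : 0 ≤ R :=
      Finset.sum_nonneg fun k _ => mul_nonneg (by simp only [hd]; positivity) (by positivity)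
    have hR2 : R ^ 2 ≤ D * (4 * S2) := by
      have h1 := Finset.sum_mul_sq_le_sq_mul_sq (BK K) d
        (fun k => ‖U (k + 1)‖ + ‖U k‖)
      have h2 : ∑ k ∈ BK K, (‖U (k + 1)‖ + ‖U k‖) ^ 2 ≤ 4 * S2 := by
        have h3 : ∀ k ∈ BK K,
            (‖U (k + 1)‖ + ‖U k‖) ^ 2 ≤ 2 * g (k + 1) + 2 * g k := by
          intro k _
          simp only [hg]
          nlinarith [sq_nonneg (‖U (k + 1)‖ - ‖U k‖)]
        calc ∑ k ∈ BK K, (‖U (k + 1)‖ + ‖U k‖) ^ 2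
            ≤ ∑ k ∈ BK K, (2 * g (k + 1) + 2 * g k) := Finset.sum_le_sum h3
          _ = 2 * (∑ k ∈ BK K, g (k + 1)) + 2 * (∑ k ∈ BK K, g k) := by
              rw [Finset.sum_add_distrib, ← Finset.mul_sum, ← Finset.mul_sum]
          _ = 4 * S2 := by rw [hshift, ← hS2]; ring
      calc R ^ 2 ≤ (∑ k ∈ BK K, d k ^ 2) *
            ∑ k ∈ BK K, (‖U (k + 1)‖ + ‖U k‖) ^ 2 := h1
        _ ≤ D * (4 * S2) := by rw [← hD]; exact mul_le_mul_of_nonneg_left h2 hDnn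
    have hle : R ≤ Real.sqrt (D * (4 * S2)) := by
      rw [← Real.sqrt_sq hRnn]
      exact Real.sqrt_le_sqrt hR2
    have hsq : Real.sqrt (D * (4 * S2)) = 2 * Real.sqrt D * Real.sqrt S2 := by
      rw [show D * (4 * S2) = 2 ^ 2 * D * S2 by ring, Real.sqrt_mul (by positivity),
        Real.sqrt_mul (by positivity), Real.sqrt_sq (by norm_num)]
    calc T ≤ R := hR
      _ ≤ Real.sqrt (D * (4 * S2)) := hle
      _ = 2 * Real.sqrt D * Real.sqrt S2 := hsq
  -- norm identities
  have hLnn : 0 ≤ l2normK K U := Real.sqrt_nonneg _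
  have hHnn : 0 ≤ h1normK K U := Real.sqrt_nonneg _
  have hL2 : l2normK K U ^ 2 = δ * S2 := by
    rw [l2normK, Real.sq_sqrt (by positivity)]
  have hH2 : h1normK K U ^ 2 = D / δ := by
    rw [h1normK, Real.sq_sqrt (by positivity)]
    have hterm : ∀ k : ℤ,
        ‖(U (k + 1) - U k) / ((2 * Real.pi / K : ℝ) : ℂ)‖ ^ 2 = d k ^ 2 / δ ^ 2 := by
      intro k
      rw [norm_div, Complex.norm_real, Real.norm_eq_abs, div_pow,
        abs_of_pos (show (0:ℝ) < 2 * Real.pi / K by positivity)]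
    rw [Finset.sum_congr rfl fun k _ => hterm k, ← Finset.sum_div, ← hD, ← hδdef]
    field_simp
  set L := l2normK K U
  set H := h1normK K U
  have hDeq : D = δ * H ^ 2 := by
    rw [hH2]; field_simp
  have hS2eq : S2 = L ^ 2 / δ := by
    rw [hL2]; field_simp
  have hDS : Real.sqrt D * Real.sqrt S2 = H * L := by
    rw [← Real.sqrt_mul hDnn, hDeq, hS2eq,
      show δ * H ^ 2 * (L ^ 2 / δ) = (H * L) ^ 2 by field_simp,
      Real.sqrt_sq (mul_nonneg hHnn hLnn)]
  have hTHL : T ≤ 2 * (H * L) := by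
    calc T ≤ 2 * Real.sqrt D * Real.sqrt S2 := hcs
      _ = 2 * (H * L) := by rw [mul_assoc, hDS]
  have hS2K : S2 / K ≤ L ^ 2 := by
    have hδK : δ * K = 2 * Real.pi := by
      rw [hδdef]; field_simp
    have heq : S2 / K = L ^ 2 / (2 * Real.pi) := by rw [hS2eq, div_div, hδK]
    rw [heq]
    exact div_le_self (sq_nonneg L) (by nlinarith [Real.pi_gt_three])
  -- final assembly
  have main : δ * ∑ k ∈ BK K, ‖U k‖ ^ 4 ≤ (S2 / K + T) * (δ * S2) := by
    calc δ * ∑ k ∈ BK K, ‖U k‖ ^ 4 ≤ δ * ((S2 / K + T) * S2) :=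
          mul_le_mul_of_nonneg_left hquart hδ.le
      _ = (S2 / K + T) * (δ * S2) := by ring
  rw [← hL2] at main
  have hHL : 0 ≤ H * L := mul_nonneg hHnn hLnn
  nlinarith [main, hTHL, hS2K, sq_nonneg L, pow_nonneg hLnn 2, pow_nonneg hLnn 4,
    mul_le_mul_of_nonneg_right hTHL (sq_nonneg L),
    mul_le_mul_of_nonneg_right hS2K (sq_nonneg L), sq_nonneg (L * L)]
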